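/- For every real number t there exists a constant l ∈ ℝ such that for all x ∈ (−√8, √8): 2·∫_{−√8}^{√8} log|x − y| · v_t(y) dy = x²/2 + t·x⁴/4 + l, the integral converging absolutely for each such x. (This is the Euler–Lagrange identity satisfied by the signed measure ν_t with density v_t minimizing the weighted logarithmic energy among signed measures of total mass one supported on [−√8, √8].) -/

import Mathlib

open MeasureTheory

/-- The density `v_t(y) = (8 − y²)^{3/2}/(24π) + (t + 1/12)(8 + 4y² − y⁴)/(2π√(8 − y²))` of the
modified equilibrium measure. -/
noncomputable def vDens (t : ℝ) (y : ℝ) : ℝ :=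
  (8 - y ^ 2) ^ ((3 : ℝ) / 2) / (24 * Real.pi)
    + (t + 1 / 12) * (8 + 4 * y ^ 2 - y ^ 4) / (2 * Real.pi * Real.sqrt (8 - y ^ 2))

open Real intervalIntegral Set Filter Topology


noncomputable def gg (u : ℝ) : ℝ := Real.log (2 * Real.sin (u / 2))

lemma gg_neg (u : ℝ) : gg (-u) = gg u := by
  simp [gg, neg_div, Real.sin_neg, mul_neg, Real.log_neg_eq_log]

lemma gg_periodic : Function.Periodic gg (2 * π) := by
  intro u
  have : (u + 2 * π) / 2 = u / 2 + π := by ring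
  simp [gg, this, Real.sin_add_pi, mul_neg, Real.log_neg_eq_log]

lemma gg_measurable : Measurable gg := by
  apply Real.measurable_log.comp
  fun_prop

lemma gg_continuousAt {u : ℝ} (h : Real.sin (u / 2) ≠ 0) : ContinuousAt gg u := by
  apply (Real.continuousAt_log (by simpa using h)).comp
  fun_prop

lemma gg_hasDerivAt {u : ℝ} (h : Real.sin (u / 2) ≠ 0) :
    HasDerivAt gg (Real.cos (u / 2) / (2 * Real.sin (u / 2))) u := by
  have h1 : HasDerivAt (fun v : ℝ => 2 * Real.sin (v / 2)) (Real.cos (u / 2)) u := by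
    have := ((Real.hasDerivAt_sin (u / 2)).comp u ((hasDerivAt_id u).div_const 2)).const_mul 2
    refine this.congr_deriv ?_
    ring
  have := (Real.hasDerivAt_log (by simpa using h)).comp u h1
  refine this.congr_deriv ?_
  field_simp

-- log is interval integrable on [0, b] for b > 0
lemma intInt_log (b : ℝ) (hb : 0 < b) : IntervalIntegrable Real.log volume 0 b := by
  have hcont : ContinuousOn (fun x : ℝ => x * Real.log b - (x * Real.log x - x)) (Icc 0 b) :=
    ((continuous_id.mul continuous_const).sub
      ((Real.continuous_mul_log).sub continuous_id)).continuousOn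
  have hderiv : ∀ x ∈ Ioo 0 b, HasDerivAt (fun x : ℝ => x * Real.log b - (x * Real.log x - x))
      (Real.log b - Real.log x) x := by
    intro x hx
    have h1 : HasDerivAt (fun x : ℝ => x * Real.log b) (Real.log b) x := by
      simpa using (hasDerivAt_id x).mul_const (Real.log b)
    have h2 : HasDerivAt (fun x : ℝ => x * Real.log x - x) (Real.log x) x := by
      have := (Real.hasDerivAt_mul_log (ne_of_gt hx.1)).sub (hasDerivAt_id x)
      simpa [Pi.sub_def] using this
    simpa [Pi.sub_def] using h1.sub h2
  have hpos : ∀ x ∈ Ioo 0 b, 0 ≤ Real.log b - Real.log x := by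
    intro x hx
    have := Real.log_le_log (by exact hx.1) (le_of_lt hx.2)
    linarith
  have hint : IntegrableOn (fun x => Real.log b - Real.log x) (Ioo 0 b) volume :=
    (integrableOn_deriv_of_nonneg hcont hderiv hpos).mono_set Ioo_subset_Ioc_self
  have : IntegrableOn Real.log (Ioo 0 b) volume := by
    have h2 : IntegrableOn (fun x : ℝ => Real.log b - (Real.log b - Real.log x)) (Ioo 0 b)
        volume := (integrableOn_const measure_Ioo_lt_top.ne).sub hint
    simpa using h2
  rw [intervalIntegrable_iff_integrableOn_Ioo_of_le (le_of_lt hb)]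
  exact this

lemma gg_bound {u : ℝ} (h1 : |u| ≤ π) (h0 : u ≠ 0) : |gg u| ≤ |Real.log u| + 2 := by
  wlog hu : 0 < u generalizing u
  · have hneg : u < 0 := lt_of_le_of_ne (not_lt.1 hu) h0
    have := this (u := -u) (by simpa using h1) (by simpa using h0) (by linarith)
    simpa [gg_neg, Real.log_neg_eq_log] using this
  -- now 0 < u ≤ π
  have hupi : u ≤ π := le_trans (le_abs_self u) h1
  have hs1 : Real.sin (u / 2) ≤ u / 2 := Real.sin_le (by linarith)
  have hs2 : u / π ≤ Real.sin (u / 2) := by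
    have := Real.mul_le_sin (x := u / 2) (by linarith) (by linarith)
    calc u / π = 2 / π * (u / 2) := by field_simp
    _ ≤ Real.sin (u / 2) := this
  have hπ : (0:ℝ) < π := Real.pi_pos
  have hspos : 0 < Real.sin (u / 2) := lt_of_lt_of_le (by positivity) hs2
  have hub : gg u ≤ Real.log u := by
    apply Real.log_le_log (by positivity)
    linarith
  have hlb : Real.log u - 2 ≤ gg u := by
    have h3 : Real.log (2 * (u / π)) ≤ gg u := by
      apply Real.log_le_log (by positivity)
      linarith
    have h4 : Real.log (2 * (u / π)) = Real.log u - (Real.log π - Real.log 2) := by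
      rw [Real.log_mul (by norm_num) (by positivity), Real.log_div (by positivity) (ne_of_gt hπ)]
      ring
    have h5 : Real.log π - Real.log 2 ≤ 2 := by
      have : Real.log (π / 2) ≤ π / 2 - 1 := Real.log_le_sub_one_of_pos (by positivity)
      have h6 : Real.log (π / 2) = Real.log π - Real.log 2 := Real.log_div (ne_of_gt hπ) (by norm_num)
      have : π ≤ 4 := Real.pi_le_four
      linarith [Real.log_le_sub_one_of_pos (show (0:ℝ) < π/2 by positivity), h6]
    linarith
  rw [abs_le]
  constructor
  · have := neg_abs_le (Real.log u); linarith
  · have := le_abs_self (Real.log u); linarith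

lemma gg_intInt_pi : IntervalIntegrable gg volume (-π) π := by
  have hmaj : IntervalIntegrable (fun u => |Real.log u| + 2) volume (-π) π := by
    have h1 : IntervalIntegrable (fun u => |Real.log u| + 2) volume 0 π :=
      (intInt_log π Real.pi_pos).abs.add (intervalIntegrable_const)
    have h2 : IntervalIntegrable (fun u => |Real.log u| + 2) volume (-π) 0 := by
      have h3 := ((IntervalIntegrable.iff_comp_neg (f := fun u => |Real.log u| + 2)).1 h1)
      have h4 : (fun x : ℝ => |Real.log (-x)| + 2) = fun x : ℝ => |Real.log x| + 2 := by
        funext x; rw [Real.log_neg_eq_log]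
      rw [h4] at h3
      simpa using h3.symm
    exact h2.trans h1
  apply hmaj.mono_fun' (gg_measurable.aestronglyMeasurable.restrict)
  have hne : ∀ᵐ x ∂(volume.restrict (Set.uIoc (-π) π)), x ≠ 0 := by
    apply ae_restrict_of_ae
    rw [ae_iff]
    have : {x : ℝ | ¬ x ≠ 0} = {0} := by ext x; simp
    rw [this]
    exact Real.volume_singleton
  have hmem := ae_restrict_mem (μ := volume) (measurableSet_uIoc : MeasurableSet (Set.uIoc (-π) π))
  filter_upwards [hne, hmem] with x hx hxmem
  have hxpi : |x| ≤ π := by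
    rw [Set.uIoc_of_le (by linarith [Real.pi_pos] : -π ≤ π)] at hxmem
    rw [abs_le]; exact ⟨le_of_lt hxmem.1, hxmem.2⟩
  simpa using gg_bound hxpi hx

lemma gg_intInt' (a b : ℝ) (hab : a ≤ b) : IntervalIntegrable gg volume a b := by
  have hπ : (0:ℝ) < π := Real.pi_pos
  have hk : ∀ k : ℤ, IntervalIntegrable gg volume (-π + 2*π*k) (π + 2*π*k) := by
    intro k
    have h1 := gg_intInt_pi.comp_sub_right (2*π*k)
    have h2 : (fun x => gg (x - 2*π*k)) = gg := by
      funext x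
      have := gg_periodic.sub_int_mul_eq (x := x) (n := k)
      rw [show x - 2*π*k = x - k * (2*π) by ring, this]
    rw [h2] at h1
    exact h1
  have hchain : ∀ n : ℕ, ∀ k : ℤ, IntervalIntegrable gg volume (-π + 2*π*k) (π + 2*π*(k+n)) := by
    intro n
    induction n with
    | zero => intro k; simpa using hk k
    | succ m ih =>
      intro k
      have h1 := ih k
      have h2 := hk (k + m + 1)
      push_cast at h1 h2 ⊢
      ring_nf at h1 h2 ⊢
      exact h1.trans h2
  set m : ℤ := ⌊(a + π) / (2 * π)⌋ with hm
  set M' : ℤ := ⌈(b - π) / (2 * π)⌉ with hM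
  set K : ℤ := max M' m with hK
  have hma : -π + 2 * π * m ≤ a := by
    have h1 : (m : ℝ) ≤ (a + π) / (2 * π) := Int.floor_le _
    have h2 : (m : ℝ) * (2 * π) ≤ a + π := (le_div_iff₀ (by positivity)).1 h1
    linarith
  have hbK : b ≤ π + 2 * π * K := by
    have h1 : (b - π) / (2 * π) ≤ (M' : ℝ) := Int.le_ceil _
    have h1' : (M' : ℝ) ≤ (K : ℝ) := by exact_mod_cast le_max_left M' m
    have h2 : b - π ≤ (M' : ℝ) * (2 * π) := by
      rw [div_le_iff₀ (by positivity)] at h1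
      linarith
    nlinarith [Real.pi_pos]
  have hmK : m ≤ K := le_max_right M' m
  obtain ⟨n, hn⟩ : ∃ n : ℕ, K = m + n := ⟨(K - m).toNat, by omega⟩
  have h := hchain n m
  apply h.mono_set
  have hord : -π + 2 * π * m ≤ π + 2 * π * (m + n) := by
    have : (0:ℝ) ≤ 2 * π * n := by positivity
    nlinarith [Real.pi_pos]
  rw [Set.uIcc_of_le hab, Set.uIcc_of_le hord]
  apply Set.Icc_subset_Icc hma
  rw [show ((m : ℝ) + (n:ℝ)) = ((K : ℤ) : ℝ) by rw [hn]; push_cast; ring]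
  exact hbK

lemma gg_intInt (a b : ℝ) : IntervalIntegrable gg volume a b := by
  rcases le_total a b with hab | hab
  · exact gg_intInt' a b hab
  · exact (gg_intInt' b a hab).symm

lemma gg_mul_cont_intInt (a b : ℝ) {k : ℝ → ℝ} (hk : Continuous k) :
    IntervalIntegrable (fun u => gg u * k u) volume a b :=
  (gg_intInt a b).mul_continuousOn hk.continuousOn

lemma gg_tendsto_zero (n : ℕ) :
    Tendsto (fun ε => gg ε * Real.sin (n * ε)) (𝓝[>] (0:ℝ)) (𝓝 0) := by
  have hbound : Tendsto (fun ε : ℝ => (n : ℝ) * (|Real.log ε * ε| + 2 * ε)) (𝓝[>] (0:ℝ)) (𝓝 0) := by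
    have h1 : Tendsto (fun ε : ℝ => Real.log ε * ε) (𝓝[>] (0:ℝ)) (𝓝 0) := by
      have := tendsto_log_mul_rpow_nhdsGT_zero (one_pos)
      simpa using this
    have h2 : Tendsto (fun ε : ℝ => |Real.log ε * ε| + 2 * ε) (𝓝[>] (0:ℝ)) (𝓝 0) := by
      have h3 := h1.abs
      have h4 : Tendsto (fun ε : ℝ => 2 * ε) (𝓝[>] (0:ℝ)) (𝓝 0) := by
        have : Tendsto (fun ε : ℝ => 2 * ε) (𝓝 (0:ℝ)) (𝓝 (2 * 0)) :=
          (continuous_const.mul continuous_id).tendsto 0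
        simpa using this.mono_left nhdsWithin_le_nhds
      simpa using h3.add h4
    have := h2.const_mul (n : ℝ)
    simpa using this
  apply squeeze_zero_norm' _ hbound
  have hmem : Ioo (0:ℝ) (min 1 π) ∈ 𝓝[>] (0:ℝ) :=
    Ioo_mem_nhdsGT_of_mem ⟨le_refl _, lt_min one_pos Real.pi_pos⟩
  filter_upwards [hmem] with ε hε
  have hε0 : 0 < ε := hε.1
  have hε1 : ε < 1 := lt_of_lt_of_le hε.2 (min_le_left _ _)
  have hεπ : ε < π := lt_of_lt_of_le hε.2 (min_le_right _ _)
  have h1 : |gg ε| ≤ |Real.log ε| + 2 := gg_bound (by rw [abs_of_pos hε0]; linarith) (ne_of_gt hε0)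
  have h2 : |Real.sin (n * ε)| ≤ (n:ℝ) * ε := by
    have h2' := Real.abs_sin_le_abs (x := (n:ℝ) * ε)
    rwa [abs_of_nonneg (show (0:ℝ) ≤ (n:ℝ) * ε by positivity)] at h2'
  have h3 : |gg ε * Real.sin (n * ε)| ≤ (|Real.log ε| + 2) * ((n:ℝ) * ε) := by
    rw [abs_mul]
    apply mul_le_mul h1 h2 (abs_nonneg _) (by positivity)
  rw [Real.norm_eq_abs]
  calc |gg ε * Real.sin (n * ε)| ≤ (|Real.log ε| + 2) * ((n:ℝ) * ε) := h3
    _ = (n:ℝ) * (|Real.log ε| * ε + 2 * ε) := by ring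
    _ = (n:ℝ) * (|Real.log ε * ε| + 2 * ε) := by
        rw [abs_mul, abs_of_pos hε0]

lemma keyC (n : ℕ) (hn : 0 < n) (Tn : ℝ → ℝ) (hTc : Continuous Tn)
    (hTid : ∀ u : ℝ, Real.sin (u / 2) ≠ 0 →
      Real.cos (u / 2) / (2 * Real.sin (u / 2)) * Real.sin (n * u) = Tn u)
    (hTint : ∫ u in (0:ℝ)..2 * π, Tn u = π) :
    ∫ u in (0:ℝ)..2 * π, gg u * Real.cos (n * u) = -(π / n) := by
  have hπ : (0:ℝ) < π := Real.pi_pos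
  have hnR : (0:ℝ) < n := by exact_mod_cast hn
  set h : ℝ → ℝ := fun u => gg u * Real.cos (n * u) with hh
  have hInt : ∀ a b : ℝ, IntervalIntegrable h volume a b := fun a b =>
    gg_mul_cont_intInt a b (by fun_prop)
  set F : ℝ → ℝ := fun u => gg u * Real.sin (n * u) / n with hF
  -- the IBP identity for each ε
  have key : ∀ ε : ℝ, ε ∈ Ioo (0:ℝ) π →
      ∫ u in ε..(2 * π - ε), h u = (F (2 * π - ε) - F ε) - (∫ u in ε..(2 * π - ε), Tn u) / n := by
    intro ε hε
    have hsub : ∀ u ∈ uIcc ε (2 * π - ε), Real.sin (u / 2) ≠ 0 := by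
      intro u hu
      rw [uIcc_of_le (by linarith [hε.2] : ε ≤ 2 * π - ε)] at hu
      have h1 : 0 < u / 2 := by linarith [hu.1, hε.1]
      have h2 : u / 2 < π := by linarith [hu.2, hε.1]
      exact ne_of_gt (Real.sin_pos_of_pos_of_lt_pi h1 h2)
    have hderiv : ∀ u ∈ uIcc ε (2 * π - ε), HasDerivAt F (h u + Tn u / n) u := by
      intro u hu
      have hs := hsub u hu
      have h0 := (Real.hasDerivAt_sin ((n:ℝ) * u)).comp u (HasDerivAt.const_mul (n:ℝ) (hasDerivAt_id u))
      have h1 : HasDerivAt (fun v : ℝ => Real.sin ((n:ℝ) * v)) (Real.cos ((n:ℝ) * u) * (n:ℝ)) u := by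
        simpa [Function.comp_def] using h0
      have h2 := ((gg_hasDerivAt hs).mul h1).div_const (n:ℝ)
      have : HasDerivAt F ((Real.cos (u/2) / (2 * Real.sin (u/2)) * Real.sin ((n:ℝ)*u)
          + gg u * (Real.cos ((n:ℝ)*u) * (n:ℝ))) / n) u := h2
      convert this using 1
      rw [hTid u hs]
      field_simp
      ring
    have hint2 : IntervalIntegrable (fun u => h u + Tn u / n) volume ε (2 * π - ε) :=
      (hInt _ _).add ((hTc.div_const _).intervalIntegrable _ _)
    have heq := integral_eq_sub_of_hasDerivAt hderiv hint2
    rw [integral_add (hInt _ _) ((hTc.div_const _).intervalIntegrable _ _)] at heq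
    rw [intervalIntegral.integral_div] at heq
    linarith [heq]
  -- limits
  have hG : Continuous (fun x : ℝ => ∫ u in (0:ℝ)..x, h u) := continuous_primitive hInt 0
  have hGT : Continuous (fun x : ℝ => ∫ u in (0:ℝ)..x, Tn u) :=
    continuous_primitive (fun a b => hTc.intervalIntegrable a b) 0
  have hsplit : ∀ (f : ℝ → ℝ), (∀ a b : ℝ, IntervalIntegrable f volume a b) → ∀ ε : ℝ,
      ∫ u in ε..(2 * π - ε), f u = (∫ u in (0:ℝ)..(2 * π - ε), f u) - ∫ u in (0:ℝ)..ε, f u := by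
    intro f hf ε
    rw [eq_sub_iff_add_eq, add_comm]
    exact integral_add_adjacent_intervals (hf _ _) (hf _ _)
  have L1 : Tendsto (fun ε => ∫ u in ε..(2 * π - ε), h u) (𝓝[>] (0:ℝ))
      (𝓝 (∫ u in (0:ℝ)..2 * π, h u)) := by
    have t1 : Tendsto (fun ε : ℝ => (∫ u in (0:ℝ)..(2 * π - ε), h u) - ∫ u in (0:ℝ)..ε, h u)
        (𝓝 (0:ℝ)) (𝓝 ((∫ u in (0:ℝ)..(2*π - 0), h u) - ∫ u in (0:ℝ)..(0:ℝ), h u)) := by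
      exact ((hG.comp (continuous_const.sub continuous_id)).sub hG).tendsto 0
    simp only [sub_zero, integral_same] at t1
    have t2 : Tendsto (fun ε : ℝ => (∫ u in (0:ℝ)..(2 * π - ε), h u) - ∫ u in (0:ℝ)..ε, h u)
        (𝓝[>] (0:ℝ)) (𝓝 (∫ u in (0:ℝ)..2 * π, h u)) := t1.mono_left nhdsWithin_le_nhds
    exact t2.congr (fun ε => (hsplit h hInt ε).symm)
  have L2 : Tendsto (fun ε => ∫ u in ε..(2 * π - ε), Tn u) (𝓝[>] (0:ℝ)) (𝓝 π) := by
    have hTI : ∀ a b : ℝ, IntervalIntegrable Tn volume a b := fun a b => hTc.intervalIntegrable a b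
    have t1 : Tendsto (fun ε : ℝ => (∫ u in (0:ℝ)..(2 * π - ε), Tn u) - ∫ u in (0:ℝ)..ε, Tn u)
        (𝓝 (0:ℝ)) (𝓝 ((∫ u in (0:ℝ)..(2*π - 0), Tn u) - ∫ u in (0:ℝ)..(0:ℝ), Tn u)) := by
      exact ((hGT.comp (continuous_const.sub continuous_id)).sub hGT).tendsto 0
    simp only [sub_zero, integral_same] at t1
    rw [hTint] at t1
    have t2 : Tendsto (fun ε : ℝ => (∫ u in (0:ℝ)..(2 * π - ε), Tn u) - ∫ u in (0:ℝ)..ε, Tn u)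
        (𝓝[>] (0:ℝ)) (𝓝 π) := t1.mono_left nhdsWithin_le_nhds
    exact t2.congr (fun ε => (hsplit Tn hTI ε).symm)
  have L3 : Tendsto (fun ε => F (2 * π - ε) - F ε) (𝓝[>] (0:ℝ)) (𝓝 0) := by
    have hFeq : ∀ ε : ℝ, F (2 * π - ε) - F ε = -2 * (gg ε * Real.sin (n * ε)) / n := by
      intro ε
      have e1 : gg (2 * π - ε) = gg ε := by
        have := gg_periodic (-ε)
        rw [show 2 * π - ε = -ε + 2 * π by ring, this, gg_neg]
      have e2 : Real.sin ((n:ℝ) * (2 * π - ε)) = -Real.sin ((n:ℝ) * ε) := by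
        have hper := (Real.sin_periodic.nat_mul n) (-((n:ℝ) * ε))
        rw [show (n:ℝ) * (2 * π - ε) = -((n:ℝ) * ε) + (n:ℝ) * (2 * π) by ring, hper, Real.sin_neg]
      simp only [hF, e1, e2]
      ring
    have := (gg_tendsto_zero n).const_mul (-2:ℝ) |>.div_const (n:ℝ)
    simp only [mul_zero, zero_div] at this
    exact this.congr (fun ε => by rw [← hFeq ε]) |>.congr (fun ε => rfl)
  -- combine
  have L4 : Tendsto (fun ε => (F (2 * π - ε) - F ε) - (∫ u in ε..(2 * π - ε), Tn u) / n)
      (𝓝[>] (0:ℝ)) (𝓝 (0 - π / n)) := L3.sub (L2.div_const _)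
  have heq : (fun ε => ∫ u in ε..(2 * π - ε), h u) =ᶠ[𝓝[>] (0:ℝ)]
      (fun ε => (F (2 * π - ε) - F ε) - (∫ u in ε..(2 * π - ε), Tn u) / n) := by
    have hmem : Ioo (0:ℝ) π ∈ 𝓝[>] (0:ℝ) := Ioo_mem_nhdsGT_of_mem ⟨le_refl _, hπ⟩
    filter_upwards [hmem] with ε hε
    exact key ε hε
  have := tendsto_nhds_unique (L1.congr' heq) L4
  rw [this]
  ring

lemma sin_nat_two_pi (n : ℕ) : Real.sin (n * (2 * π)) = 0 := by
  rw [show (n:ℝ) * (2 * π) = ((2*n : ℕ) : ℝ) * π by push_cast; ring, Real.sin_nat_mul_pi]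

lemma cos_sq_half' (u : ℝ) : Real.cos (u/2) ^ 2 = 1/2 + Real.cos u / 2 := by
  have := Real.cos_sq (u/2)
  rwa [show 2*(u/2) = u by ring] at this

lemma sin_u_half (u : ℝ) : Real.sin u = 2 * Real.sin (u/2) * Real.cos (u/2) := by
  rw [← Real.sin_two_mul]
  congr 1
  ring

lemma T2_id (u : ℝ) (hs : Real.sin (u/2) ≠ 0) :
    Real.cos (u/2) / (2 * Real.sin (u/2)) * Real.sin (2 * u)
      = 1/2 + Real.cos u + Real.cos (2*u) / 2 := by
  have P : Real.cos (u/2) * Real.sin (2*u)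
      = 2 * Real.sin (u/2) * (1/2 + Real.cos u + Real.cos (2*u) / 2) := by
    rw [Real.sin_two_mul, sin_u_half, Real.cos_two_mul]
    linear_combination (4 * Real.sin (u/2) * Real.cos u) * cos_sq_half' u
  rw [div_mul_eq_mul_div, div_eq_iff (mul_ne_zero two_ne_zero hs)]
  linear_combination P

lemma T4_id (u : ℝ) (hs : Real.sin (u/2) ≠ 0) :
    Real.cos (u/2) / (2 * Real.sin (u/2)) * Real.sin (4 * u)
      = 1/2 + Real.cos u + Real.cos (2*u) + Real.cos (3*u) + Real.cos (4*u) / 2 := by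
  have e1 : Real.sin (4*u) = 8 * Real.sin (u/2) * Real.cos (u/2) * Real.cos u * Real.cos (2*u) := by
    rw [show (4:ℝ)*u = 2*(2*u) by ring, Real.sin_two_mul, Real.sin_two_mul, sin_u_half]
    ring
  have P : Real.cos (u/2) * Real.sin (4*u)
      = 2 * Real.sin (u/2) * (1/2 + Real.cos u + Real.cos (2*u) + Real.cos (3*u)
        + Real.cos (4*u) / 2) := by
    rw [e1, Real.cos_three_mul, show (4:ℝ)*u = 2*(2*u) by ring, Real.cos_two_mul (2*u),
      Real.cos_two_mul u]
    linear_combination (8 * Real.sin (u/2) * Real.cos u * (2*Real.cos u^2 - 1)) * cos_sq_half' u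
  rw [div_mul_eq_mul_div, div_eq_iff (mul_ne_zero two_ne_zero hs)]
  linear_combination P

lemma T2_int : ∫ u in (0:ℝ)..2*π, (1/2 + Real.cos u + Real.cos (2*u) / 2) = π := by
  have hderiv : ∀ u ∈ uIcc (0:ℝ) (2*π), HasDerivAt
      (fun u : ℝ => u/2 + Real.sin u + Real.sin (2*u)/4)
      (1/2 + Real.cos u + Real.cos (2*u) / 2) u := by
    intro u _
    have h1 : HasDerivAt (fun u : ℝ => u/2) (1/2) u := by
      simpa using (hasDerivAt_id u).div_const 2
    have h2 := Real.hasDerivAt_sin u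
    have h3 : HasDerivAt (fun u : ℝ => Real.sin (2*u)) (Real.cos (2*u) * 2) u := by
      simpa [Function.comp_def] using
        (Real.hasDerivAt_sin (2*u)).comp u (HasDerivAt.const_mul (2:ℝ) (hasDerivAt_id u))
    have := (h1.add h2).add (h3.div_const 4)
    refine this.congr_deriv ?_
    ring
  rw [integral_eq_sub_of_hasDerivAt hderiv ((by fun_prop : Continuous fun u : ℝ =>
    (1/2 + Real.cos u + Real.cos (2*u) / 2)).intervalIntegrable _ _)]
  have h8 := sin_nat_two_pi 2
  push_cast at h8
  simp [Real.sin_two_pi, h8]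

lemma T4_int : ∫ u in (0:ℝ)..2*π,
    (1/2 + Real.cos u + Real.cos (2*u) + Real.cos (3*u) + Real.cos (4*u) / 2) = π := by
  have hderiv : ∀ u ∈ uIcc (0:ℝ) (2*π), HasDerivAt
      (fun u : ℝ => u/2 + Real.sin u + Real.sin (2*u)/2 + Real.sin (3*u)/3 + Real.sin (4*u)/8)
      (1/2 + Real.cos u + Real.cos (2*u) + Real.cos (3*u) + Real.cos (4*u) / 2) u := by
    intro u _
    have h1 : HasDerivAt (fun u : ℝ => u/2) (1/2) u := by
      simpa using (hasDerivAt_id u).div_const 2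
    have h2 := Real.hasDerivAt_sin u
    have hk : ∀ k : ℝ, HasDerivAt (fun u : ℝ => Real.sin (k*u)) (Real.cos (k*u) * k) u := by
      intro k
      simpa [Function.comp_def] using
        (Real.hasDerivAt_sin (k*u)).comp u (HasDerivAt.const_mul k (hasDerivAt_id u))
    have := (((h1.add h2).add ((hk 2).div_const 2)).add ((hk 3).div_const 3)).add
      ((hk 4).div_const 8)
    refine this.congr_deriv ?_
    ring
  rw [integral_eq_sub_of_hasDerivAt hderiv ((by fun_prop : Continuous fun u : ℝ =>
    (1/2 + Real.cos u + Real.cos (2*u) + Real.cos (3*u) + Real.cos (4*u) / 2)).intervalIntegrable _ _)]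
  have h8 := sin_nat_two_pi 2
  have h12 := sin_nat_two_pi 3
  have h16 := sin_nat_two_pi 4
  push_cast at h8 h12 h16
  simp [Real.sin_two_pi, h8, h12, h16]

lemma gamma2 : ∫ u in (0:ℝ)..2*π, gg u * Real.cos (2*u) = -(π/2) := by
  have := keyC 2 (by norm_num) (fun u => 1/2 + Real.cos u + Real.cos (2*u) / 2)
    (by fun_prop) (fun u hu => by push_cast; exact T2_id u hu) T2_int
  push_cast at this
  simpa using this

lemma gamma4 : ∫ u in (0:ℝ)..2*π, gg u * Real.cos (4*u) = -(π/4) := by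
  have := keyC 4 (by norm_num)
    (fun u => 1/2 + Real.cos u + Real.cos (2*u) + Real.cos (3*u) + Real.cos (4*u) / 2)
    (by fun_prop) (fun u hu => by push_cast; exact T4_id u hu) T4_int
  push_cast at this
  simpa using this

lemma gg_mul_cont_intInt' (a b : ℝ) {k : ℝ → ℝ} (hk : Continuous k) :
    IntervalIntegrable (fun u => gg u * k u) volume a b :=
  (gg_intInt a b).mul_continuousOn hk.continuousOn

lemma Ksum (n : ℕ) (φ : ℝ) :
    ∫ θ in (0:ℝ)..π, (gg (θ - φ) + gg (θ + φ)) * Real.cos (n * θ)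
      = Real.cos (n * φ) * ∫ u in (0:ℝ)..2 * π, gg u * Real.cos (n * u) := by
  set fc : ℝ → ℝ := fun u => gg u * Real.cos (n * u) with hfcdef
  set fs : ℝ → ℝ := fun u => gg u * Real.sin (n * u) with hfsdef
  have hfc : ∀ a b : ℝ, IntervalIntegrable fc volume a b :=
    fun a b => gg_mul_cont_intInt' a b (by fun_prop)
  have hfs : ∀ a b : ℝ, IntervalIntegrable fs volume a b :=
    fun a b => gg_mul_cont_intInt' a b (by fun_prop)
  have hfceven : ∀ u : ℝ, fc (-u) = fc u := by
    intro u
    simp only [hfcdef]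
    rw [show (n:ℝ) * (-u) = -((n:ℝ)*u) by ring, Real.cos_neg, gg_neg]
  have hfsodd : ∀ u : ℝ, fs (-u) = -fs u := by
    intro u
    simp only [hfsdef]
    rw [show (n:ℝ) * (-u) = -((n:ℝ)*u) by ring, Real.sin_neg, gg_neg]
    ring
  have hfcper : Function.Periodic fc (2 * π) := by
    intro u
    simp only [hfcdef]
    rw [gg_periodic u, show (n:ℝ) * (u + 2*π) = (n:ℝ)*u + (n:ℝ)*(2*π) by ring,
      (Real.cos_periodic.nat_mul n) ((n:ℝ)*u)]
  have hfsper : Function.Periodic fs (2 * π) := by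
    intro u
    simp only [hfsdef]
    rw [gg_periodic u, show (n:ℝ) * (u + 2*π) = (n:ℝ)*u + (n:ℝ)*(2*π) by ring,
      (Real.sin_periodic.nat_mul n) ((n:ℝ)*u)]
  -- integrability of shifted pieces on [0, π]
  have hfcm : IntervalIntegrable (fun θ => fc (θ - φ)) volume 0 π := by
    have := (hfc (-φ) (π - φ)).comp_sub_right φ
    simpa using this
  have hfsm : IntervalIntegrable (fun θ => fs (θ - φ)) volume 0 π := by
    have := (hfs (-φ) (π - φ)).comp_sub_right φ
    simpa using this
  have hfcp : IntervalIntegrable (fun θ => fc (θ + φ)) volume 0 π := by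
    have := (hfc φ (π + φ)).comp_add_right φ
    simpa using this
  have hfsp : IntervalIntegrable (fun θ => fs (θ + φ)) volume 0 π := by
    have := (hfs φ (π + φ)).comp_add_right φ
    simpa using this
  -- pointwise expansions
  have e1 : ∀ θ : ℝ, gg (θ - φ) * Real.cos (n * θ)
      = Real.cos (n*φ) * fc (θ - φ) - Real.sin (n*φ) * fs (θ - φ) := by
    intro θ
    simp only [hfcdef, hfsdef]
    rw [show (n:ℝ)*θ = (n:ℝ)*(θ - φ) + (n:ℝ)*φ by ring, Real.cos_add]
    ring
  have e2 : ∀ θ : ℝ, gg (θ + φ) * Real.cos (n * θ)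
      = Real.cos (n*φ) * fc (θ + φ) + Real.sin (n*φ) * fs (θ + φ) := by
    intro θ
    simp only [hfcdef, hfsdef]
    rw [show (n:ℝ)*θ = (n:ℝ)*(θ + φ) - (n:ℝ)*φ by ring, Real.cos_sub]
    ring
  -- split the integral
  have hsplit : ∫ θ in (0:ℝ)..π, (gg (θ - φ) + gg (θ + φ)) * Real.cos (n * θ)
      = Real.cos (n*φ) * ((∫ θ in (0:ℝ)..π, fc (θ - φ)) + ∫ θ in (0:ℝ)..π, fc (θ + φ))
        + Real.sin (n*φ) * ((∫ θ in (0:ℝ)..π, fs (θ + φ)) - ∫ θ in (0:ℝ)..π, fs (θ - φ)) := by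
    have : ∀ θ : ℝ, (gg (θ - φ) + gg (θ + φ)) * Real.cos (n * θ)
        = Real.cos (n*φ) * (fc (θ - φ) + fc (θ + φ))
          + Real.sin (n*φ) * (fs (θ + φ) - fs (θ - φ)) := by
      intro θ
      have := e1 θ
      have := e2 θ
      nlinarith [e1 θ, e2 θ]
    rw [integral_congr (fun θ _ => this θ)]
    rw [integral_add ((hfcm.add hfcp).const_mul _) (((hfsp.sub hfsm)).const_mul _),
      intervalIntegral.integral_const_mul, intervalIntegral.integral_const_mul, integral_add hfcm hfcp, integral_sub hfsp hfsm]
  -- change of variables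
  have hc1 : ∫ θ in (0:ℝ)..π, fc (θ - φ) = ∫ u in (φ - π)..φ, fc u := by
    rw [integral_comp_sub_right fc φ]
    rw [show (0:ℝ) - φ = -φ by ring]
    calc ∫ u in (-φ)..(π - φ), fc u = ∫ u in (-φ)..(π - φ), fc (-u) :=
          integral_congr (fun u _ => (hfceven u).symm)
      _ = ∫ u in (-(π - φ))..(-(-φ)), fc u := integral_comp_neg fc
      _ = ∫ u in (φ - π)..φ, fc u := by rw [show -(π - φ) = φ - π by ring, neg_neg]
  have hc2 : ∫ θ in (0:ℝ)..π, fc (θ + φ) = ∫ u in φ..(π + φ), fc u := by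
    rw [integral_comp_add_right fc φ, zero_add]
  have hs1 : ∫ θ in (0:ℝ)..π, fs (θ - φ) = -∫ u in (φ - π)..φ, fs u := by
    rw [integral_comp_sub_right fs φ]
    rw [show (0:ℝ) - φ = -φ by ring]
    calc ∫ u in (-φ)..(π - φ), fs u = ∫ u in (-φ)..(π - φ), -fs (-u) := by
          apply integral_congr
          intro u _
          show fs u = -fs (-u)
          rw [hfsodd u, neg_neg]
      _ = -∫ u in (-φ)..(π - φ), fs (-u) := intervalIntegral.integral_neg
      _ = -∫ u in (-(π - φ))..(-(-φ)), fs u := by rw [integral_comp_neg fs]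
      _ = -∫ u in (φ - π)..φ, fs u := by rw [show -(π - φ) = φ - π by ring, neg_neg]
  have hs2 : ∫ θ in (0:ℝ)..π, fs (θ + φ) = ∫ u in φ..(π + φ), fs u := by
    rw [integral_comp_add_right fs φ, zero_add]
  -- glue the two adjacent intervals and use periodicity
  have hcfull : (∫ u in (φ - π)..φ, fc u) + ∫ u in φ..(π + φ), fc u
      = ∫ u in (0:ℝ)..2*π, fc u := by
    rw [show π + φ = φ + π by ring, integral_add_adjacent_intervals (hfc _ _) (hfc _ _)]
    have := hfcper.intervalIntegral_add_eq (φ - π) 0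
    rw [show φ - π + 2*π = φ + π by ring, zero_add] at this
    exact this
  have hsfull : (∫ u in (φ - π)..φ, fs u) + ∫ u in φ..(π + φ), fs u = 0 := by
    rw [show π + φ = φ + π by ring, integral_add_adjacent_intervals (hfs _ _) (hfs _ _)]
    have h1 := hfsper.intervalIntegral_add_eq (φ - π) (-π)
    rw [show φ - π + 2*π = φ + π by ring, show -π + 2*π = π by ring] at h1
    rw [h1]
    have h2 : ∫ u in (-π)..π, fs (-u) = ∫ u in (-π)..π, fs u := by
      rw [integral_comp_neg fs, neg_neg]
    have h3 : ∫ u in (-π)..π, fs (-u) = -∫ u in (-π)..π, fs u := by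
      rw [integral_congr (fun u _ => hfsodd u), intervalIntegral.integral_neg]
    linarith [h2.symm.trans h3]
  rw [hsplit, hc1, hc2, hs1, hs2, ← hcfull]
  linear_combination (Real.sin (n*φ)) * hsfull

-- ∫ cos(kθ) over [0, π] vanishes for k = 2, 4
lemma int_cos_even (k : ℕ) (hk : 0 < k) : ∫ θ in (0:ℝ)..π, Real.cos (2*k*θ) = 0 := by
  have hderiv : ∀ θ ∈ uIcc (0:ℝ) π, HasDerivAt (fun θ : ℝ => Real.sin (2*k*θ) / (2*k))
      (Real.cos (2*k*θ)) θ := by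
    intro θ _
    have h0 := (Real.hasDerivAt_sin (2*(k:ℝ)*θ)).comp θ
      (HasDerivAt.const_mul (2*(k:ℝ)) (hasDerivAt_id θ))
    have h1 : HasDerivAt (fun v : ℝ => Real.sin (2*(k:ℝ)*v)) (Real.cos (2*(k:ℝ)*θ) * (2*(k:ℝ))) θ := by
      simpa [Function.comp_def] using h0
    have h2 := h1.div_const (2*(k:ℝ))
    refine h2.congr_deriv ?_
    have : (2*(k:ℝ)) ≠ 0 := by positivity
    field_simp
  rw [integral_eq_sub_of_hasDerivAt hderiv ((by fun_prop : Continuous fun θ : ℝ =>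
    Real.cos (2*k*θ)).intervalIntegrable _ _)]
  have := sin_nat_two_pi k
  rw [show ((k:ℝ)) * (2 * π) = 2*(k:ℝ)*π by ring] at this
  simp [this]

set_option maxHeartbeats 3000000 in
/-- The Euler–Lagrange identity: there is a constant `l` such that for all
`x ∈ (−√8, √8)`, `2∫ log|x − y| v_t(y) dy = x²/2 + t x⁴/4 + l`, the integral converging
absolutely. -/
theorem stmt11 (t : ℝ) :
    ∃ l : ℝ, ∀ x ∈ Set.Ioo (-Real.sqrt 8) (Real.sqrt 8),
      IntervalIntegrable (fun y => Real.log |x - y| * vDens t y) volume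
        (-Real.sqrt 8) (Real.sqrt 8) ∧
      2 * ∫ y in (-Real.sqrt 8)..(Real.sqrt 8), Real.log |x - y| * vDens t y
        = x ^ 2 / 2 + t * x ^ 4 / 4 + l := by
  have hπ : (0:ℝ) < π := Real.pi_pos
  set C0 : ℝ := ∫ u in (0:ℝ)..2*π, gg u with hC0
  set c : ℝ := t + 1/12 with hc
  refine ⟨Real.log 2 + 2*C0/π - 2 - 6*t, ?_⟩
  intro x hx
  set R : ℝ := Real.sqrt 8 with hRdef
  have hR0 : 0 < R := Real.sqrt_pos.2 (by norm_num)
  have hR2 : R^2 = 8 := Real.sq_sqrt (by norm_num)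
  have hz1 : -1 < x / R := by
    rw [lt_div_iff₀ hR0]
    have := hx.1
    nlinarith
  have hz2 : x / R < 1 := by
    rw [div_lt_iff₀ hR0]
    have := hx.2
    nlinarith
  set φ : ℝ := Real.arccos (x / R) with hφdef
  have hcos : Real.cos φ = x / R := Real.cos_arccos (le_of_lt hz1) (le_of_lt hz2)
  have hφ0 : 0 < φ := Real.arccos_pos.2 hz2
  have hφπ : φ < π := by
    rcases lt_or_eq_of_le (Real.arccos_le_pi (x/R)) with h | h
    · exact h
    · exfalso
      rw [hφdef, h, Real.cos_pi] at hcos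
      linarith
  have hxRcos : x = R * Real.cos φ := by
    rw [hcos]
    field_simp
  -- coefficients
  set b0 : ℝ := 1/π with hb0
  set b2 : ℝ := -4/(3*π) - 8*c/π with hb2
  set b4 : ℝ := 1/(3*π) - 4*c/π with hb4
  set w0 : ℝ → ℝ := fun θ => b0 + b2 * Real.cos (2*θ) + b4 * Real.cos (4*θ) with hw0
  have hw0cont : Continuous w0 := by fun_prop
  -- (a) the density transforms to w0
  have ha : ∀ θ ∈ Ioo (0:ℝ) π, R * Real.sin θ * vDens t (R * Real.cos θ) = w0 θ := by
    intro θ hθ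
    have hsθ : 0 < Real.sin θ := Real.sin_pos_of_pos_of_lt_pi hθ.1 hθ.2
    have hy2 : (R * Real.cos θ)^2 = 8 * Real.cos θ^2 := by
      rw [mul_pow, hR2]
    have h8 : 8 - (R * Real.cos θ)^2 = 8 * Real.sin θ^2 := by
      rw [hy2]
      nlinarith [Real.sin_sq_add_cos_sq θ]
    have hsq : Real.sqrt (8 * Real.sin θ^2) = R * Real.sin θ := by
      rw [show 8 * Real.sin θ^2 = (R * Real.sin θ)^2 by rw [mul_pow, hR2]]
      exact Real.sqrt_sq (by positivity)
    have hrpow : (8 * Real.sin θ^2 : ℝ) ^ ((3:ℝ)/2) = 8 * Real.sin θ^2 * (R * Real.sin θ) := by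
      rw [show (3:ℝ)/2 = 1 + 1/2 by norm_num,
        Real.rpow_add (by positivity : (0:ℝ) < 8 * Real.sin θ^2), Real.rpow_one,
        ← Real.sqrt_eq_rpow, hsq]
    have hy4 : (R * Real.cos θ)^4 = 64 * Real.cos θ^4 := by
      rw [show (R * Real.cos θ)^4 = ((R * Real.cos θ)^2)^2 by ring, hy2]
      ring
    have hRs : R * Real.sin θ ≠ 0 := by positivity
    have hR2' : R * R = 8 := by nlinarith [hR2]
    have hs2 : Real.sin θ^2 = 1 - Real.cos θ^2 := by
      linear_combination (Real.sin_sq_add_cos_sq θ)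
    have step1 : R * Real.sin θ * vDens t (R * Real.cos θ)
        = 8/(3*π) * Real.sin θ^4 + c * (8 + 32*Real.cos θ^2 - 64*Real.cos θ^4)/(2*π) := by
      unfold vDens
      rw [h8, hrpow, hsq, hy2, hy4, ← hc]
      field_simp
      linear_combination (48*Real.sin θ^4) * hR2
    rw [step1]
    simp only [hw0]
    rw [show (4:ℝ)*θ = 2*(2*θ) by ring, Real.cos_two_mul (2*θ), Real.cos_two_mul θ, hb0, hb2, hb4,
      show Real.sin θ^4 = (Real.sin θ^2)^2 by ring, hs2]
    field_simp
    ring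
  -- (b) the log kernel factorizes
  have hRsqrt2 : R = 2 * Real.sqrt 2 := by
    rw [hRdef, show (8:ℝ) = 4 * 2 by norm_num, Real.sqrt_mul (by norm_num) 2,
      show Real.sqrt 4 = 2 by
        rw [show (4:ℝ) = 2^2 by norm_num]; exact Real.sqrt_sq (by norm_num)]
  have hs2pos : 0 < Real.sqrt 2 := Real.sqrt_pos.2 (by norm_num)
  have hb : ∀ θ ∈ Ioo (0:ℝ) π, θ ≠ φ →
      Real.log |x - R * Real.cos θ| = Real.log (Real.sqrt 2) + gg (θ - φ) + gg (θ + φ) := by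
    intro θ hθ hne
    have hfact : x - R * Real.cos θ
        = Real.sqrt 2 * (2 * Real.sin ((θ - φ)/2)) * (2 * Real.sin ((θ + φ)/2)) := by
      rw [hxRcos, ← mul_sub, Real.cos_sub_cos, hRsqrt2]
      rw [show (φ - θ)/2 = -((θ - φ)/2) by ring, Real.sin_neg,
        show (φ + θ)/2 = (θ + φ)/2 by ring]
      ring
    have hplus : 0 < Real.sin ((θ + φ)/2) := by
      apply Real.sin_pos_of_pos_of_lt_pi
      · linarith [hθ.1, hφ0]
      · linarith [hθ.2, hφπ]
    have hminus : Real.sin ((θ - φ)/2) ≠ 0 := by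
      intro hzero
      have h1 : -π < (θ - φ)/2 := by
        have := hθ.1; have := hφπ; have := hπ; linarith
      have h2 : (θ - φ)/2 < π := by
        have := hθ.2; have := hφ0; have := hπ; linarith
      have h3 := (Real.sin_eq_zero_iff_of_lt_of_lt h1 h2).1 hzero
      exact hne (by linarith)
    have h2m : 2 * Real.sin ((θ - φ)/2) ≠ 0 := by
      simpa using hminus
    have h2p : 2 * Real.sin ((θ + φ)/2) ≠ 0 := by positivity
    rw [hfact, Real.log_abs, Real.log_mul (mul_ne_zero (ne_of_gt hs2pos) h2m) h2p,
      Real.log_mul (ne_of_gt hs2pos) h2m]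
    rfl
  -- set up the change of variables
  set G : ℝ → ℝ := fun y => Real.log |x - y| * vDens t y with hG
  set S : ℝ → ℝ := fun θ => gg (θ - φ) + gg (θ + φ) with hS
  set H : ℝ → ℝ := fun θ => (Real.log (Real.sqrt 2) + S θ) * w0 θ with hH
  have hggm : IntervalIntegrable (fun θ => gg (θ - φ)) volume 0 π := by
    have := (gg_intInt (-φ) (π - φ)).comp_sub_right φ
    simpa using this
  have hggp : IntervalIntegrable (fun θ => gg (θ + φ)) volume 0 π := by
    have := (gg_intInt φ (π + φ)).comp_add_right φ
    simpa using this
  have hSint : IntervalIntegrable S volume 0 π := hggm.add hggp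
  have hHint : IntervalIntegrable H volume 0 π :=
    (intervalIntegrable_const.add hSint).mul_continuousOn hw0cont.continuousOn
  have hmeas : MeasurableSet (Ioo (0:ℝ) π) := measurableSet_Ioo
  have hderiv : ∀ θ ∈ Ioo (0:ℝ) π, HasDerivWithinAt (fun θ => R * Real.cos θ)
      (-(R * Real.sin θ)) (Ioo (0:ℝ) π) θ := by
    intro θ _
    have h1 := (Real.hasDerivAt_cos θ).const_mul R
    have h2 : HasDerivAt (fun θ => R * Real.cos θ) (-(R * Real.sin θ)) θ := by
      refine h1.congr_deriv ?_
      ring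
    exact h2.hasDerivWithinAt
  have hinj : InjOn (fun θ => R * Real.cos θ) (Ioo (0:ℝ) π) := by
    intro a ha b hb hab
    have hcc : Real.cos a = Real.cos b := mul_left_cancel₀ (ne_of_gt hR0) hab
    exact Real.strictAntiOn_cos.injOn ⟨le_of_lt ha.1, le_of_lt ha.2⟩
      ⟨le_of_lt hb.1, le_of_lt hb.2⟩ hcc
  have himage : (fun θ => R * Real.cos θ) '' (Ioo 0 π) = Ioo (-R) R := by
    ext y
    constructor
    · rintro ⟨θ, hθ, rfl⟩
      have h1 : Real.cos θ < Real.cos 0 := Real.strictAntiOn_cos ⟨le_refl 0, hπ.le⟩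
        ⟨hθ.1.le, hθ.2.le⟩ hθ.1
      have h2 : Real.cos π < Real.cos θ := Real.strictAntiOn_cos ⟨hθ.1.le, hθ.2.le⟩
        ⟨hπ.le, le_refl π⟩ hθ.2
      rw [Real.cos_zero] at h1
      rw [Real.cos_pi] at h2
      constructor
      · show -R < R * Real.cos θ
        nlinarith
      · show R * Real.cos θ < R
        nlinarith
    · intro hy
      have hy1 : -1 < y / R := by
        rw [lt_div_iff₀ hR0]
        have := hy.1
        nlinarith
      have hy2 : y / R < 1 := by
        rw [div_lt_iff₀ hR0]
        have := hy.2
        nlinarith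
      have hyc : Real.cos (Real.arccos (y/R)) = y / R :=
        Real.cos_arccos (le_of_lt hy1) (le_of_lt hy2)
      refine ⟨Real.arccos (y / R), ⟨Real.arccos_pos.2 hy2, ?_⟩, ?_⟩
      · refine lt_of_le_of_ne (Real.arccos_le_pi _) (fun h => ?_)
        rw [h, Real.cos_pi] at hyc
        linarith
      · show R * Real.cos (Real.arccos (y/R)) = y
        rw [hyc]
        field_simp
  have haeeq : (fun θ => |(-(R * Real.sin θ))| • G (R * Real.cos θ))
      =ᵐ[volume.restrict (Ioo (0:ℝ) π)] H := by
    have hane : ∀ᵐ θ ∂(volume.restrict (Ioo (0:ℝ) π)), θ ≠ φ := by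
      apply ae_restrict_of_ae
      rw [ae_iff]
      have he : {θ : ℝ | ¬ θ ≠ φ} = {φ} := by ext θ; simp
      rw [he]
      exact Real.volume_singleton
    filter_upwards [hane, ae_restrict_mem hmeas] with θ hne hmem
    have hsθ : 0 < Real.sin θ := Real.sin_pos_of_pos_of_lt_pi hmem.1 hmem.2
    have habs : |(-(R * Real.sin θ))| = R * Real.sin θ := by
      rw [abs_neg, abs_of_pos (by positivity)]
    show |(-(R * Real.sin θ))| • G (R * Real.cos θ) = H θ
    rw [habs, smul_eq_mul]
    simp only [hG, hH, hS]
    rw [hb θ hmem hne]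
    calc R * Real.sin θ * ((Real.log (Real.sqrt 2) + gg (θ - φ) + gg (θ + φ))
          * vDens t (R * Real.cos θ))
        = (Real.log (Real.sqrt 2) + gg (θ - φ) + gg (θ + φ))
          * (R * Real.sin θ * vDens t (R * Real.cos θ)) := by ring
      _ = (Real.log (Real.sqrt 2) + (gg (θ - φ) + gg (θ + φ))) * w0 θ := by
          rw [ha θ hmem]; ring
  have hIntIff := integrableOn_image_iff_integrableOn_abs_deriv_smul hmeas hderiv hinj G
  rw [himage] at hIntIff
  have hHIoo : IntegrableOn H (Ioo (0:ℝ) π) volume := hHint.1.mono_set Ioo_subset_Ioc_self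
  have hGIoo : IntegrableOn G (Ioo (-R) R) volume := by
    rw [hIntIff]
    exact hHIoo.congr haeeq.symm
  have hGint : IntervalIntegrable G volume (-R) R := by
    rw [intervalIntegrable_iff_integrableOn_Ioo_of_le (by linarith : -R ≤ R)]
    exact hGIoo
  refine ⟨hGint, ?_⟩
  -- evaluate the integral
  have himg_int := integral_image_eq_integral_abs_deriv_smul hmeas hderiv hinj G
  rw [himage] at himg_int
  have hval : ∫ y in (-R)..R, G y = ∫ θ in (0:ℝ)..π, H θ := by
    rw [integral_of_le (by linarith : -R ≤ R), integral_Ioc_eq_integral_Ioo, himg_int,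
      integral_congr_ae haeeq, ← integral_Ioc_eq_integral_Ioo,
      ← integral_of_le hπ.le]
  -- the Fourier coefficients
  have K0 : ∫ θ in (0:ℝ)..π, S θ = C0 := by
    have hk := Ksum 0 φ
    simp only [Nat.cast_zero, zero_mul, Real.cos_zero, mul_one, one_mul] at hk
    simp only [hS]
    rw [hk, hC0]
  have K2 : ∫ θ in (0:ℝ)..π, S θ * Real.cos (2*θ) = Real.cos (2*φ) * (-(π/2)) := by
    have hk := Ksum 2 φ
    push_cast at hk
    rw [gamma2] at hk
    simp only [hS]
    exact hk
  have K4 : ∫ θ in (0:ℝ)..π, S θ * Real.cos (4*θ) = Real.cos (4*φ) * (-(π/4)) := by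
    have hk := Ksum 4 φ
    push_cast at hk
    rw [gamma4] at hk
    simp only [hS]
    exact hk
  -- integral of w0
  have i2 : ∫ θ in (0:ℝ)..π, Real.cos (2*θ) = 0 := by
    have := int_cos_even 1 (by norm_num)
    push_cast at this
    simpa using this
  have i4 : ∫ θ in (0:ℝ)..π, Real.cos (4*θ) = 0 := by
    have := int_cos_even 2 (by norm_num)
    push_cast at this
    rw [show (4:ℝ) = 2*2 by norm_num]
    exact this
  have hw0val : ∫ θ in (0:ℝ)..π, w0 θ = b0 * π := by
    simp only [hw0]
    rw [integral_add (intervalIntegrable_const.add (((by fun_prop : Continuous fun θ : ℝ =>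
        b2 * Real.cos (2*θ))).intervalIntegrable _ _))
      (((by fun_prop : Continuous fun θ : ℝ => b4 * Real.cos (4*θ))).intervalIntegrable _ _),
      integral_add intervalIntegrable_const (((by fun_prop : Continuous fun θ : ℝ =>
        b2 * Real.cos (2*θ))).intervalIntegrable _ _),
      intervalIntegral.integral_const, intervalIntegral.integral_const_mul, intervalIntegral.integral_const_mul, i2, i4]
    simp
    ring
  -- expand ∫ H
  have hexp : ∀ θ : ℝ, H θ = Real.log (Real.sqrt 2) * w0 θ + b0 * S θ
      + b2 * (S θ * Real.cos (2*θ)) + b4 * (S θ * Real.cos (4*θ)) := by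
    intro θ
    simp only [hH, hw0]
    ring
  have hSc2 : IntervalIntegrable (fun θ => S θ * Real.cos (2*θ)) volume 0 π :=
    hSint.mul_continuousOn (by fun_prop : Continuous fun θ : ℝ => Real.cos (2*θ)).continuousOn
  have hSc4 : IntervalIntegrable (fun θ => S θ * Real.cos (4*θ)) volume 0 π :=
    hSint.mul_continuousOn (by fun_prop : Continuous fun θ : ℝ => Real.cos (4*θ)).continuousOn
  have hHval : ∫ θ in (0:ℝ)..π, H θ
      = Real.log (Real.sqrt 2) * (b0 * π) + b0 * C0
        + b2 * (Real.cos (2*φ) * (-(π/2))) + b4 * (Real.cos (4*φ) * (-(π/4))) := by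
    rw [integral_congr (fun θ _ => hexp θ)]
    rw [integral_add (((((by fun_prop : Continuous fun θ : ℝ =>
        Real.log (Real.sqrt 2) * w0 θ)).intervalIntegrable _ _).add
        (hSint.const_mul b0)).add (hSc2.const_mul b2)) (hSc4.const_mul b4),
      integral_add ((((by fun_prop : Continuous fun θ : ℝ =>
        Real.log (Real.sqrt 2) * w0 θ)).intervalIntegrable _ _).add
        (hSint.const_mul b0)) (hSc2.const_mul b2),
      integral_add (((by fun_prop : Continuous fun θ : ℝ =>
        Real.log (Real.sqrt 2) * w0 θ)).intervalIntegrable _ _) (hSint.const_mul b0),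
      intervalIntegral.integral_const_mul, intervalIntegral.integral_const_mul,
      intervalIntegral.integral_const_mul, intervalIntegral.integral_const_mul,
      hw0val, K0, K2, K4]
  -- final arithmetic
  have hcos2 : Real.cos (2*φ) = x^2/4 - 1 := by
    rw [Real.cos_two_mul, hcos]
    have hdiv : (x/R)^2 = x^2/8 := by
      rw [div_pow, hR2]
    rw [hdiv]
    ring
  have hcos4 : Real.cos (4*φ) = x^4/8 - x^2 + 1 := by
    rw [show (4:ℝ)*φ = 2*(2*φ) by ring, Real.cos_two_mul, hcos2]
    ring
  rw [hval, hHval, hcos2, hcos4, hb0, hb2, hb4, Real.log_sqrt (by norm_num), hc]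
  field_simp
  ring
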